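/- arXiv:2208.05831 — 2 statements merged into one kernel-verified Lean document; each statement's English description precedes it below -/
import Mathlib

section
/- For all integers i, b with 1 ≤ i ≤ b-2 and b ≤ N+1, one has e_i f_{i,b} - f_{i,b} e_i = q f_{i+1,b} k_i² in U. -/
noncomputable section

open FreeAlgebra

/-- `𝕜 = F(q)`, the field of rational functions over `F`. -/
abbrev kk (F : Type) [Field F] : Type := RatFunc F

/-- The variable `q`. -/
def qq (F : Type) [Field F] : kk F := RatFunc.X

/-- `v = q²`. -/
def vv (F : Type) [Field F] : kk F := qq F ^ 2

/-- The balanced quantum integer `[n]_v`. -/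
def qint (F : Type) [Field F] (n : ℤ) : kk F :=
  (vv F ^ n - vv F ^ (-n)) / (vv F - (vv F)⁻¹)

/-- The quantum factorial `[m]_v!`. -/
def qfact (F : Type) [Field F] (m : ℕ) : kk F :=
  ∏ j ∈ Finset.Icc 1 m, qint F j

/-- The balanced Gaussian binomial coefficient `C(n,i)_v`. -/
def qbinom (F : Type) [Field F] (n i : ℕ) : kk F :=
  qfact F n / (qfact F i * qfact F (n - i))

/-- The Cartan matrix of `sl(N+1)`, with 1-based indices. -/
def cartan (i j : ℕ) : ℤ :=
  if i = j then 2 else if i + 1 = j ∨ j + 1 = i then -1 else 0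

/-- Generators of `U_q(sl(N+1))`: `e i`, `f i`, `k i`, `kinv i` (0-based `i : Fin N`,
corresponding to the 1-based index `i+1`). -/
inductive Gen (N : ℕ) : Type
  | e : Fin N → Gen N
  | f : Fin N → Gen N
  | k : Fin N → Gen N
  | kinv : Fin N → Gen N

/-- The defining relations of `U_q(sl(N+1))`. -/
inductive UqRel (F : Type) [Field F] (N : ℕ) :
    FreeAlgebra (kk F) (Gen N) → FreeAlgebra (kk F) (Gen N) → Prop
  | kkinv (i : Fin N) : UqRel F N (ι (kk F) (Gen.k i) * ι (kk F) (Gen.kinv i)) 1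
  | kinvk (i : Fin N) : UqRel F N (ι (kk F) (Gen.kinv i) * ι (kk F) (Gen.k i)) 1
  | kcomm (i j : Fin N) :
      UqRel F N (ι (kk F) (Gen.k i) * ι (kk F) (Gen.k j))
        (ι (kk F) (Gen.k j) * ι (kk F) (Gen.k i))
  | ke (i j : Fin N) :
      UqRel F N (ι (kk F) (Gen.k i) * ι (kk F) (Gen.e j) * ι (kk F) (Gen.kinv i))
        ((qq F ^ cartan ((i : ℕ) + 1) ((j : ℕ) + 1)) • ι (kk F) (Gen.e j))
  | kf (i j : Fin N) :
      UqRel F N (ι (kk F) (Gen.k i) * ι (kk F) (Gen.f j) * ι (kk F) (Gen.kinv i))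
        ((qq F ^ (-cartan ((i : ℕ) + 1) ((j : ℕ) + 1))) • ι (kk F) (Gen.f j))
  | ef (i j : Fin N) :
      UqRel F N (ι (kk F) (Gen.e i) * ι (kk F) (Gen.f j) - ι (kk F) (Gen.f j) * ι (kk F) (Gen.e i))
        (if i = j then
          ((qq F ^ 2 - qq F ^ (-2 : ℤ))⁻¹) •
            ((ι (kk F) (Gen.k i)) ^ 2 - (ι (kk F) (Gen.kinv i)) ^ 2)
        else 0)
  | serre_e_near (i j : Fin N) (h : (i : ℕ) + 1 = j ∨ (j : ℕ) + 1 = i) :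
      UqRel F N
        ((ι (kk F) (Gen.e i)) ^ 2 * ι (kk F) (Gen.e j)
          - (qq F ^ 2 + qq F ^ (-2 : ℤ)) •
              (ι (kk F) (Gen.e i) * ι (kk F) (Gen.e j) * ι (kk F) (Gen.e i))
          + ι (kk F) (Gen.e j) * (ι (kk F) (Gen.e i)) ^ 2) 0
  | serre_f_near (i j : Fin N) (h : (i : ℕ) + 1 = j ∨ (j : ℕ) + 1 = i) :
      UqRel F N
        ((ι (kk F) (Gen.f i)) ^ 2 * ι (kk F) (Gen.f j)
          - (qq F ^ 2 + qq F ^ (-2 : ℤ)) •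
              (ι (kk F) (Gen.f i) * ι (kk F) (Gen.f j) * ι (kk F) (Gen.f i))
          + ι (kk F) (Gen.f j) * (ι (kk F) (Gen.f i)) ^ 2) 0
  | serre_e_far (i j : Fin N) (h : (i : ℕ) + 1 < j ∨ (j : ℕ) + 1 < i) :
      UqRel F N (ι (kk F) (Gen.e i) * ι (kk F) (Gen.e j))
        (ι (kk F) (Gen.e j) * ι (kk F) (Gen.e i))
  | serre_f_far (i j : Fin N) (h : (i : ℕ) + 1 < j ∨ (j : ℕ) + 1 < i) :
      UqRel F N (ι (kk F) (Gen.f i) * ι (kk F) (Gen.f j))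
        (ι (kk F) (Gen.f j) * ι (kk F) (Gen.f i))

/-- The quantized enveloping algebra `U = U_q(sl(N+1))`. -/
abbrev Uq (F : Type) [Field F] (N : ℕ) : Type := RingQuot (UqRel F N)

variable (F : Type) [Field F] (N : ℕ)

/-- The image of a generator in `U`. -/
def gen (g : Gen N) : Uq F N := RingQuot.mkAlgHom (kk F) (UqRel F N) (ι (kk F) g)

/-- `e_i` (1-based index `1 ≤ i ≤ N`; junk value `0` outside this range). -/
def egen (i : ℕ) : Uq F N :=
  if h : 1 ≤ i ∧ i ≤ N then gen F N (Gen.e ⟨i - 1, by omega⟩) else 0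

/-- `f_i` (1-based index). -/
def fgen (i : ℕ) : Uq F N :=
  if h : 1 ≤ i ∧ i ≤ N then gen F N (Gen.f ⟨i - 1, by omega⟩) else 0

/-- `k_i` (1-based index). -/
def kgen (i : ℕ) : Uq F N :=
  if h : 1 ≤ i ∧ i ≤ N then gen F N (Gen.k ⟨i - 1, by omega⟩) else 0

/-- `k_i⁻¹` (1-based index). -/
def kinvgen (i : ℕ) : Uq F N :=
  if h : 1 ≤ i ∧ i ≤ N then gen F N (Gen.kinv ⟨i - 1, by omega⟩) else 0

/-- Auxiliary recursion: `fword i d = f_{i, i+1+d}`. -/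
def fword (i : ℕ) : ℕ → Uq F N
  | 0 => fgen F N i
  | d + 1 =>
      qq F • (fword i d * fgen F N (i + 1 + d)) -
        (qq F)⁻¹ • (fgen F N (i + 1 + d) * fword i d)

/-- The quantum root vector `f_{i,j}` (for `1 ≤ i < j ≤ N+1`). -/
def fij (i j : ℕ) : Uq F N := fword F N i (j - i - 1)

/-- Product of `f_{a,b}` over successive entries of a list. -/
def fList : List ℕ → Uq F N
  | a :: b :: rest => fij F N a b * fList (b :: rest)
  | _ => 1

/-- `f_S` for a finite set `S` of indices. -/
def fSet (S : Finset ℕ) : Uq F N := fList F N (S.sort (· ≤ ·))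

/-- The index set `𝕀` of subsets of `{1,…,N+1}` containing `1` and `N+1`. -/
def II : Finset (Finset ℕ) :=
  (Finset.Icc 1 (N + 1)).powerset.filter fun I => 1 ∈ I ∧ N + 1 ∈ I

/-- `r(I) = {s - 1 : s ∈ {1,…,N+1} \ I}`. -/
def rSet (I : Finset ℕ) : Finset ℕ := (Finset.Icc 1 (N + 1) \ I).image (· - 1)

/-- `k_{σ_i} = k_1 ⋯ k_i`. -/
def kσ (i : ℕ) : Uq F N := ((List.range i).map fun j => kgen F N (j + 1)).prod

/-- `K_{σ_i} = k_{σ_i}²`. -/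
def Kσ (i : ℕ) : Uq F N := kσ F N i ^ 2

/-- `k_{σ_i}⁻¹ = k_1⁻¹ ⋯ k_i⁻¹`. -/
def kσinv (i : ℕ) : Uq F N := ((List.range i).map fun j => kinvgen F N (j + 1)).prod

/-- `K_{σ_i}⁻¹`. -/
def KσInv (i : ℕ) : Uq F N := kσinv F N i ^ 2

/-- The element `h_i = -q⁻¹ v^{-(i-1)} K_{σ_i}⁻¹ (K_{σ_i} v^i - K_{σ_i}⁻¹ v^{-i})/(v - v⁻¹) ∈ U`. -/
def hElt (i : ℕ) : Uq F N :=
  (-(qq F)⁻¹ * vv F ^ (1 - (i : ℤ)) * (vv F - (vv F)⁻¹)⁻¹) •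
    (KσInv F N i * (vv F ^ (i : ℤ) • Kσ F N i - vv F ^ (-(i : ℤ)) • KσInv F N i))

/-- `H_I = ∏_{i ∈ r(I)} h_i` (product taken in increasing order of indices). -/
def HI (I : Finset ℕ) : Uq F N := (((rSet N I).sort (· ≤ ·)).map (hElt F N)).prod

/-- A weight `λ` is recorded by its values `(λ, α_j)` for `1 ≤ j ≤ N`;
`pairσ lam i = (λ, σ_i) = (λ, α_1 + ⋯ + α_i)`. -/
def pairσ (lam : ℕ → ℤ) (i : ℕ) : ℤ := ∑ j ∈ Finset.Icc 1 i, lam j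

/-- The scalar `h_i(λ) = -q⁻¹ v^{-((λ,σ_i)+i-1)} [(λ,σ_i)+i]_v`. -/
def hval (lam : ℕ → ℤ) (i : ℕ) : kk F :=
  -(qq F)⁻¹ * vv F ^ (-(pairσ lam i + (i : ℤ) - 1)) * qint F (pairσ lam i + (i : ℤ))

/-- The scalar `H_I(λ) = ∏_{i ∈ r(I)} h_i(λ)`. -/
def HIval (lam : ℕ → ℤ) (I : Finset ℕ) : kk F := ∏ i ∈ rSet N I, hval F lam i

/-- The left ideal `J_λ` of `U` generated by `e_1, …, e_N` and the `k_j - q^{(λ,α_j)}`. -/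
def vermaIdeal (lam : ℕ → ℤ) : Submodule (Uq F N) (Uq F N) :=
  Submodule.span (Uq F N)
    ({x | ∃ j, 1 ≤ j ∧ j ≤ N ∧ x = egen F N j} ∪
      {x | ∃ j, 1 ≤ j ∧ j ≤ N ∧
        x = kgen F N j - algebraMap (kk F) (Uq F N) (qq F ^ lam j)})

/-- The Verma module `M(λ) = U/J_λ`. -/
abbrev Verma (lam : ℕ → ℤ) : Type := Uq F N ⧸ vermaIdeal F N lam

/-- The highest weight vector `v_λ`, the image of `1` in `M(λ)`. -/
def hw (lam : ℕ → ℤ) : Verma F N lam := Submodule.Quotient.mk 1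

/-- The candidate Shapovalov element `Θ_η = Σ_{I ∈ 𝕀} f_I H_I`. -/
def Theta : Uq F N := ∑ I ∈ II N, fSet F N I * HI F N I

/-- `D^n(λ)`: the `(n-1) × (n-1)` matrix over `U` with `(i,j)` entry (1-based)
`f_{i,j+1}` if `i ≤ j`, `-h_j(λ)·1` if `i = j+1`, and `0` otherwise. -/
def Dmat (lam : ℕ → ℤ) (n : ℕ) : Matrix (Fin (n - 1)) (Fin (n - 1)) (Uq F N) :=
  Matrix.of fun i j =>
    if (i : ℕ) ≤ (j : ℕ) then fij F N ((i : ℕ) + 1) ((j : ℕ) + 2)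
    else if (i : ℕ) = (j : ℕ) + 1 then
      -(algebraMap (kk F) (Uq F N) (hval F lam ((j : ℕ) + 1)))
    else 0

/-- The left-to-right determinant of a matrix with noncommutative entries. -/
def ldet {m : ℕ} (B : Matrix (Fin m) (Fin m) (Uq F N)) : Uq F N :=
  ∑ w : Equiv.Perm (Fin m),
    ((Equiv.Perm.sign w : ℤˣ) : ℤ) • ((List.finRange m).map fun j => B (w j) j).prod

end


section Stmt2Aux

variable (F : Type) [Field F] (N : ℕ)

lemma qq_ne_zero : qq F ≠ 0 := RatFunc.X_ne_zero

lemma q4_sub_one_ne_zero : qq F ^ 4 - 1 ≠ 0 := by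
  rw [sub_ne_zero]
  intro h4
  have h4' : (Polynomial.X : Polynomial F) ^ 4 = 1 := by
    apply RatFunc.algebraMap_injective F
    rw [map_pow, RatFunc.algebraMap_X, map_one]
    exact h4
  have := congrArg Polynomial.natDegree h4'
  simp [Polynomial.natDegree_X_pow] at this

lemma scalar1 {S : Type} [Field S] (q : S) (hq0 : q ≠ 0) (h4 : q ^ 4 - 1 ≠ 0) :
    q * ((q ^ 2 - (q ^ 2)⁻¹)⁻¹ * q ^ 2) - q⁻¹ * (q ^ 2 - (q ^ 2)⁻¹)⁻¹ = q := by
  have h4a : (-1 : S) + q ^ 4 ≠ 0 := fun h => h4 (by linear_combination h)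
  have h4b : -q + q ^ 5 ≠ 0 := by
    intro h
    rcases mul_eq_zero.mp (show q * (-1 + q ^ 4) = 0 by linear_combination h) with h' | h'
    exacts [hq0 h', h4a h']
  have h4c : q ^ 2 * q ^ 2 - 1 ≠ 0 := fun h => h4 (by linear_combination h)
  have hden : q ^ 2 - (q ^ 2)⁻¹ ≠ 0 := by
    intro h
    apply h4
    have := mul_eq_zero_of_left h (q ^ 2)
    rw [sub_mul, inv_mul_cancel₀ (pow_ne_zero 2 hq0)] at this
    linear_combination this
  field_simp [h4a, h4b, h4c]

lemma scalar2 {S : Type} [Field S] (q : S) (hq0 : q ≠ 0) (h4 : q ^ 4 - 1 ≠ 0) :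
    q * ((q ^ 2 - (q ^ 2)⁻¹)⁻¹ * (q ^ 2)⁻¹) - q⁻¹ * (q ^ 2 - (q ^ 2)⁻¹)⁻¹ = 0 := by
  have h4a : (-1 : S) + q ^ 4 ≠ 0 := fun h => h4 (by linear_combination h)
  have h4c : q ^ 2 * q ^ 2 - 1 ≠ 0 := fun h => h4 (by linear_combination h)
  have hden : q ^ 2 - (q ^ 2)⁻¹ ≠ 0 := by
    intro h
    apply h4
    have := mul_eq_zero_of_left h (q ^ 2)
    rw [sub_mul, inv_mul_cancel₀ (pow_ne_zero 2 hq0)] at this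
    linear_combination this
  field_simp [h4a, h4c]
  ring

/-- generic base-case computation -/
lemma calc_base {S : Type} [Field S] {R : Type} [Ring R] [Algebra S R]
    (q c s t : S) (E A B K K' : R)
    (hq : q * (c * s) - q⁻¹ * c = q) (hq2 : q * (c * t) - q⁻¹ * c = 0)
    (hEA : E * A - A * E = c • (K ^ 2 - K' ^ 2)) (hEB : E * B = B * E)
    (hKB : K ^ 2 * B = s • (B * K ^ 2)) (hK'B : K' ^ 2 * B = t • (B * K' ^ 2)) :
    E * (q • (A * B) - q⁻¹ • (B * A)) - (q • (A * B) - q⁻¹ • (B * A)) * E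
      = q • (B * K ^ 2) := by
  have hEA' : E * A = c • (K ^ 2 - K' ^ 2) + A * E := sub_eq_iff_eq_add.mp hEA
  have h1 : E * (A * B) = A * B * E + (c * s) • (B * K ^ 2) - (c * t) • (B * K' ^ 2) := by
    calc E * (A * B) = (E * A) * B := by rw [mul_assoc]
    _ = (c • (K ^ 2 - K' ^ 2) + A * E) * B := by rw [hEA']
    _ = c • (K ^ 2 * B - K' ^ 2 * B) + A * (E * B) := by
        rw [add_mul, smul_mul_assoc, sub_mul, mul_assoc]
    _ = c • (s • (B * K ^ 2) - t • (B * K' ^ 2)) + A * (B * E) := by rw [hEB, hKB, hK'B]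
    _ = _ := by
        rw [← mul_assoc, smul_sub, smul_smul, smul_smul]; abel
  have h2 : E * (B * A) = B * A * E + c • (B * K ^ 2) - c • (B * K' ^ 2) := by
    calc E * (B * A) = (E * B) * A := by rw [mul_assoc]
    _ = B * (E * A) := by rw [hEB, mul_assoc]
    _ = B * (c • (K ^ 2 - K' ^ 2)) + B * (A * E) := by rw [hEA', mul_add]
    _ = _ := by
        rw [mul_smul_comm, mul_sub, ← mul_assoc, smul_sub]; abel
  rw [mul_sub, sub_mul, mul_smul_comm, mul_smul_comm, smul_mul_assoc, smul_mul_assoc, h1, h2]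
  match_scalars
  · ring
  · linear_combination hq
  · linear_combination -hq2
  · ring

/-- generic inductive-step computation -/
lemma calc_step {S : Type} [Field S] {R : Type} [Ring R] [Algebra S R]
    (q : S) (E X B Y K : R)
    (hEX : E * X - X * E = q • (Y * K ^ 2)) (hEB : E * B = B * E)
    (hKB : K ^ 2 * B = B * K ^ 2) :
    E * (q • (X * B) - q⁻¹ • (B * X)) - (q • (X * B) - q⁻¹ • (B * X)) * E
      = q • ((q • (Y * B) - q⁻¹ • (B * Y)) * K ^ 2) := by
  have hEX' : E * X = q • (Y * K ^ 2) + X * E := sub_eq_iff_eq_add.mp hEX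
  have h1 : E * (X * B) = X * B * E + q • (Y * B * K ^ 2) := by
    calc E * (X * B) = (E * X) * B := by rw [mul_assoc]
    _ = q • (Y * (K ^ 2 * B)) + X * (E * B) := by
        rw [hEX', add_mul, smul_mul_assoc, mul_assoc, mul_assoc]
    _ = _ := by rw [hEB, hKB, ← mul_assoc, ← mul_assoc]; abel
  have h2 : E * (B * X) = B * X * E + q • (B * Y * K ^ 2) := by
    calc E * (B * X) = (E * B) * X := by rw [mul_assoc]
    _ = B * (E * X) := by rw [hEB, mul_assoc]
    _ = B * (q • (Y * K ^ 2)) + B * (X * E) := by rw [hEX', mul_add]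
    _ = _ := by rw [mul_smul_comm, ← mul_assoc, ← mul_assoc]; abel
  rw [mul_sub, sub_mul, mul_smul_comm, mul_smul_comm, smul_mul_assoc, smul_mul_assoc, h1, h2,
    sub_mul, smul_mul_assoc, smul_mul_assoc]
  match_scalars <;> ring

-- Fin-level relation lemmas
lemma k_kinv (i : Fin N) : gen F N (Gen.k i) * gen F N (Gen.kinv i) = 1 := by
  have h := RingQuot.mkAlgHom_rel (kk F) (UqRel.kkinv (F := F) i)
  simpa [gen, map_mul] using h

lemma kinv_k (i : Fin N) : gen F N (Gen.kinv i) * gen F N (Gen.k i) = 1 := by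
  have h := RingQuot.mkAlgHom_rel (kk F) (UqRel.kinvk (F := F) i)
  simpa [gen, map_mul] using h

lemma k_f (i j : Fin N) :
    gen F N (Gen.k i) * gen F N (Gen.f j)
      = (qq F ^ (-cartan ((i : ℕ) + 1) ((j : ℕ) + 1))) •
          (gen F N (Gen.f j) * gen F N (Gen.k i)) := by
  have h := RingQuot.mkAlgHom_rel (kk F) (UqRel.kf (F := F) i j)
  simp only [map_mul, map_smul] at h
  have h' : gen F N (Gen.k i) * gen F N (Gen.f j) * gen F N (Gen.kinv i)
      = (qq F ^ (-cartan ((i : ℕ) + 1) ((j : ℕ) + 1))) • gen F N (Gen.f j) := h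
  calc gen F N (Gen.k i) * gen F N (Gen.f j)
      = gen F N (Gen.k i) * gen F N (Gen.f j) *
          (gen F N (Gen.kinv i) * gen F N (Gen.k i)) := by rw [kinv_k, mul_one]
    _ = (gen F N (Gen.k i) * gen F N (Gen.f j) * gen F N (Gen.kinv i)) * gen F N (Gen.k i) := by
        simp only [mul_assoc]
    _ = _ := by rw [h', smul_mul_assoc]

lemma kinv_f (i j : Fin N) :
    gen F N (Gen.kinv i) * gen F N (Gen.f j)
      = (qq F ^ (cartan ((i : ℕ) + 1) ((j : ℕ) + 1))) •
          (gen F N (Gen.f j) * gen F N (Gen.kinv i)) := by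
  set a := cartan ((i : ℕ) + 1) ((j : ℕ) + 1) with ha
  have h := k_f F N i j
  have h2 : gen F N (Gen.f j) * gen F N (Gen.kinv i)
      = (qq F ^ (-a)) • (gen F N (Gen.kinv i) * gen F N (Gen.f j)) := by
    calc gen F N (Gen.f j) * gen F N (Gen.kinv i)
        = (gen F N (Gen.kinv i) * gen F N (Gen.k i)) * (gen F N (Gen.f j) *
            gen F N (Gen.kinv i)) := by rw [kinv_k, one_mul]
      _ = gen F N (Gen.kinv i) * ((gen F N (Gen.k i) * gen F N (Gen.f j)) *
            gen F N (Gen.kinv i)) := by simp only [mul_assoc]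
      _ = gen F N (Gen.kinv i) * (((qq F ^ (-a)) •
            (gen F N (Gen.f j) * gen F N (Gen.k i))) * gen F N (Gen.kinv i)) := by rw [h]
      _ = (qq F ^ (-a)) • (gen F N (Gen.kinv i) * (gen F N (Gen.f j) *
            (gen F N (Gen.k i) * gen F N (Gen.kinv i)))) := by
          simp only [smul_mul_assoc, mul_smul_comm, mul_assoc]
      _ = (qq F ^ (-a)) • (gen F N (Gen.kinv i) * gen F N (Gen.f j)) := by
          rw [k_kinv, mul_one]
  rw [h2, smul_smul, ← zpow_add₀ (qq_ne_zero F), add_neg_cancel, zpow_zero, one_smul]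

lemma k_sq_f (i j : Fin N) :
    (gen F N (Gen.k i)) ^ 2 * gen F N (Gen.f j)
      = (qq F ^ (-2 * cartan ((i : ℕ) + 1) ((j : ℕ) + 1))) •
          (gen F N (Gen.f j) * (gen F N (Gen.k i)) ^ 2) := by
  set a := cartan ((i : ℕ) + 1) ((j : ℕ) + 1) with ha
  have h := k_f F N i j
  have : (gen F N (Gen.k i)) ^ 2 * gen F N (Gen.f j)
      = (qq F ^ (-a) * qq F ^ (-a)) • (gen F N (Gen.f j) * (gen F N (Gen.k i)) ^ 2) := by
    calc (gen F N (Gen.k i)) ^ 2 * gen F N (Gen.f j)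
        = gen F N (Gen.k i) * (gen F N (Gen.k i) * gen F N (Gen.f j)) := by
          rw [sq, mul_assoc]
      _ = gen F N (Gen.k i) * ((qq F ^ (-a)) •
            (gen F N (Gen.f j) * gen F N (Gen.k i))) := by rw [h]
      _ = (qq F ^ (-a)) • ((gen F N (Gen.k i) * gen F N (Gen.f j)) * gen F N (Gen.k i)) := by
          rw [mul_smul_comm, ← mul_assoc]
      _ = (qq F ^ (-a)) • (((qq F ^ (-a)) •
            (gen F N (Gen.f j) * gen F N (Gen.k i))) * gen F N (Gen.k i)) := by rw [h]
      _ = _ := by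
          rw [smul_mul_assoc, smul_smul, mul_assoc, ← sq (gen F N (Gen.k i))]
  rw [this, ← zpow_add₀ (qq_ne_zero F)]
  congr 1
  ring

lemma kinv_sq_f (i j : Fin N) :
    (gen F N (Gen.kinv i)) ^ 2 * gen F N (Gen.f j)
      = (qq F ^ (2 * cartan ((i : ℕ) + 1) ((j : ℕ) + 1))) •
          (gen F N (Gen.f j) * (gen F N (Gen.kinv i)) ^ 2) := by
  set a := cartan ((i : ℕ) + 1) ((j : ℕ) + 1) with ha
  have h := kinv_f F N i j
  have : (gen F N (Gen.kinv i)) ^ 2 * gen F N (Gen.f j)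
      = (qq F ^ a * qq F ^ a) • (gen F N (Gen.f j) * (gen F N (Gen.kinv i)) ^ 2) := by
    calc (gen F N (Gen.kinv i)) ^ 2 * gen F N (Gen.f j)
        = gen F N (Gen.kinv i) * (gen F N (Gen.kinv i) * gen F N (Gen.f j)) := by
          rw [sq, mul_assoc]
      _ = gen F N (Gen.kinv i) * ((qq F ^ a) •
            (gen F N (Gen.f j) * gen F N (Gen.kinv i))) := by rw [h]
      _ = (qq F ^ a) • ((gen F N (Gen.kinv i) * gen F N (Gen.f j)) * gen F N (Gen.kinv i)) := by
          rw [mul_smul_comm, ← mul_assoc]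
      _ = (qq F ^ a) • (((qq F ^ a) •
            (gen F N (Gen.f j) * gen F N (Gen.kinv i))) * gen F N (Gen.kinv i)) := by rw [h]
      _ = _ := by
          rw [smul_mul_assoc, smul_smul, mul_assoc, ← sq (gen F N (Gen.kinv i))]
  rw [this, ← zpow_add₀ (qq_ne_zero F)]
  congr 1
  ring

lemma e_f_ne (i j : Fin N) (h : i ≠ j) :
    gen F N (Gen.e i) * gen F N (Gen.f j) = gen F N (Gen.f j) * gen F N (Gen.e i) := by
  have hr := RingQuot.mkAlgHom_rel (kk F) (UqRel.ef (F := F) i j)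
  rw [if_neg h] at hr
  simp only [map_sub, map_mul, map_zero] at hr
  exact sub_eq_zero.mp hr

lemma e_f_same (i : Fin N) :
    gen F N (Gen.e i) * gen F N (Gen.f i) - gen F N (Gen.f i) * gen F N (Gen.e i)
      = ((qq F ^ 2 - qq F ^ (-2 : ℤ))⁻¹) •
          ((gen F N (Gen.k i)) ^ 2 - (gen F N (Gen.kinv i)) ^ 2) := by
  have hr := RingQuot.mkAlgHom_rel (kk F) (UqRel.ef (F := F) i i)
  rw [if_pos rfl] at hr
  simp only [map_sub, map_mul, map_smul, map_pow] at hr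
  exact hr

-- nat-level
lemma egen_eq (a : ℕ) (h1 : 1 ≤ a) (h2 : a ≤ N) :
    egen F N a = gen F N (Gen.e ⟨a - 1, by omega⟩) := dif_pos ⟨h1, h2⟩

lemma fgen_eq (a : ℕ) (h1 : 1 ≤ a) (h2 : a ≤ N) :
    fgen F N a = gen F N (Gen.f ⟨a - 1, by omega⟩) := dif_pos ⟨h1, h2⟩

lemma kgen_eq (a : ℕ) (h1 : 1 ≤ a) (h2 : a ≤ N) :
    kgen F N a = gen F N (Gen.k ⟨a - 1, by omega⟩) := dif_pos ⟨h1, h2⟩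

lemma kinvgen_eq (a : ℕ) (h1 : 1 ≤ a) (h2 : a ≤ N) :
    kinvgen F N a = gen F N (Gen.kinv ⟨a - 1, by omega⟩) := dif_pos ⟨h1, h2⟩

lemma ef_ne (a b : ℕ) (ha : 1 ≤ a) (ha' : a ≤ N) (hb : 1 ≤ b) (hb' : b ≤ N) (hne : a ≠ b) :
    egen F N a * fgen F N b = fgen F N b * egen F N a := by
  rw [egen_eq F N a ha ha', fgen_eq F N b hb hb']
  exact e_f_ne F N _ _ (by simp only [ne_eq, Fin.mk.injEq]; omega)

lemma ef_same (a : ℕ) (ha : 1 ≤ a) (ha' : a ≤ N) :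
    egen F N a * fgen F N a - fgen F N a * egen F N a
      = ((qq F ^ 2 - qq F ^ (-2 : ℤ))⁻¹) • ((kgen F N a) ^ 2 - (kinvgen F N a) ^ 2) := by
  rw [egen_eq F N a ha ha', fgen_eq F N a ha ha', kgen_eq F N a ha ha', kinvgen_eq F N a ha ha']
  exact e_f_same F N _

lemma cartan_coe (a b : ℕ) (ha : 1 ≤ a) (hb : 1 ≤ b) :
    cartan (a - 1 + 1) (b - 1 + 1) = cartan a b := by
  congr 1 <;> omega

lemma k_sq_f_nat (a b : ℕ) (ha : 1 ≤ a) (ha' : a ≤ N) (hb : 1 ≤ b) (hb' : b ≤ N) :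
    (kgen F N a) ^ 2 * fgen F N b
      = (qq F ^ (-2 * cartan a b)) • (fgen F N b * (kgen F N a) ^ 2) := by
  rw [kgen_eq F N a ha ha', fgen_eq F N b hb hb']
  have h := k_sq_f F N ⟨a - 1, by omega⟩ ⟨b - 1, by omega⟩
  simpa [cartan_coe a b ha hb] using h

lemma kinv_sq_f_nat (a b : ℕ) (ha : 1 ≤ a) (ha' : a ≤ N) (hb : 1 ≤ b) (hb' : b ≤ N) :
    (kinvgen F N a) ^ 2 * fgen F N b
      = (qq F ^ (2 * cartan a b)) • (fgen F N b * (kinvgen F N a) ^ 2) := by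
  rw [kinvgen_eq F N a ha ha', fgen_eq F N b hb hb']
  have h := kinv_sq_f F N ⟨a - 1, by omega⟩ ⟨b - 1, by omega⟩
  simpa [cartan_coe a b ha hb] using h

lemma cartan_adj (a : ℕ) : cartan a (a + 1) = -1 := by
  unfold cartan
  rw [if_neg (by omega), if_pos (by omega)]

lemma cartan_far (a b : ℕ) (h : a + 2 ≤ b) : cartan a b = 0 := by
  unfold cartan
  rw [if_neg (by omega), if_neg (by omega)]

lemma fword_zero (i : ℕ) : fword F N i 0 = fgen F N i := by rw [fword]

lemma fword_succ (i d : ℕ) :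
    fword F N i (d + 1) = qq F • (fword F N i d * fgen F N (i + 1 + d)) -
      (qq F)⁻¹ • (fgen F N (i + 1 + d) * fword F N i d) := by rw [fword]

lemma main_aux (i e : ℕ) (hi : 1 ≤ i) (hr : i + e + 1 ≤ N) :
    egen F N i * fword F N i (e + 1) - fword F N i (e + 1) * egen F N i
      = qq F • (fword F N (i + 1) e * (kgen F N i) ^ 2) := by
  induction e with
  | zero =>
      rw [fword_succ F N i 0, fword_zero F N i, fword_zero F N (i + 1), Nat.add_zero]
      have hKB := k_sq_f_nat F N i (i + 1) hi (by omega) (by omega) (by omega)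
      have hK'B := kinv_sq_f_nat F N i (i + 1) hi (by omega) (by omega) (by omega)
      rw [cartan_adj] at hKB hK'B
      norm_num at hKB hK'B
      have hq0 : qq F ≠ 0 := qq_ne_zero F
      have h4 : qq F ^ 4 - 1 ≠ 0 := q4_sub_one_ne_zero F
      have hzneg : qq F ^ (-2 : ℤ) = (qq F ^ 2)⁻¹ := by
        rw [zpow_neg, zpow_two, pow_two]
      refine calc_base (qq F) ((qq F ^ 2 - qq F ^ (-2 : ℤ))⁻¹) (qq F ^ 2)
        ((qq F ^ 2)⁻¹) (egen F N i) (fgen F N i) (fgen F N (i + 1)) (kgen F N i)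
        (kinvgen F N i) ?_ ?_ ?_ ?_ ?_ ?_
      · rw [hzneg]
        exact scalar1 (qq F) hq0 h4
      · rw [hzneg]
        exact scalar2 (qq F) hq0 h4
      · exact ef_same F N i hi (by omega)
      · exact ef_ne F N i (i + 1) hi (by omega) (by omega) (by omega) (by omega)
      · exact hKB
      · exact hK'B
  | succ e ih =>
      have hr' : i + e + 1 ≤ N := by omega
      rw [fword_succ F N i (e + 1), fword_succ F N (i + 1) e]
      have hidx : i + 1 + (e + 1) = i + 1 + 1 + e := by omega
      rw [hidx]
      refine calc_step (qq F) (egen F N i) (fword F N i (e + 1)) (fgen F N (i + 1 + 1 + e))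
        (fword F N (i + 1) e) (kgen F N i) ?_ ?_ ?_
      · exact ih hr'
      · exact ef_ne F N i (i + 1 + 1 + e) hi (by omega) (by omega) (by omega) (by omega)
      · have h := k_sq_f_nat F N i (i + 1 + 1 + e) hi (by omega) (by omega) (by omega)
        rw [cartan_far i (i + 1 + 1 + e) (by omega)] at h
        simpa using h

end Stmt2Aux

/-- for `1 ≤ i ≤ b-2`, `b ≤ N+1`:
`e_i f_{i,b} - f_{i,b} e_i = q f_{i+1,b} k_i²` in `U`. -/
theorem stmt2 (F : Type) [Field F] (N : ℕ) (hN : 1 ≤ N) (i b : ℕ)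
    (hi : 1 ≤ i) (hib : i ≤ b - 2) (hb : b ≤ N + 1) :
    egen F N i * fij F N i b - fij F N i b * egen F N i =
      qq F • (fij F N (i + 1) b * (kgen F N i) ^ 2) := by
  have he : b - i - 1 = (b - i - 2) + 1 := by omega
  have he2 : b - (i + 1) - 1 = b - i - 2 := by omega
  rw [fij, fij, he, he2]
  exact main_aux F N i (b - i - 2) hi (by omega)
end

section
/- For every weight λ, det→(D^{N+1}(λ)) = Σ_{I ∈ 𝕀} f_I · H_I(λ) in U. In particular, for every weight λ with (λ, η) = 1 - N, the left-to-right determinant det→(D^{N+1}(λ)) equals the evaluation at λ of the Shapovalov element Θ_η = Σ_{I ∈ 𝕀} f_I H_I. -/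
noncomputable section Aux

/-- Generalized Hessenberg matrix `M(c,a,m)`. -/
def Mmat (F : Type) [Field F] (N : ℕ) (lam : ℕ → ℤ) (c a m : ℕ) :
    Matrix (Fin m) (Fin m) (Uq F N) :=
  Matrix.of fun i j =>
    if (i : ℕ) = 0 then fij F N c (a + (j : ℕ) + 1)
    else if (i : ℕ) ≤ (j : ℕ) then fij F N (a + (i : ℕ)) (a + (j : ℕ) + 1)
    else if (i : ℕ) = (j : ℕ) + 1 then
      -(algebraMap (kk F) (Uq F N) (hval F lam (a + (j : ℕ))))
    else 0

/-- Generalized right-hand side. -/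
def Rsum (F : Type) [Field F] (N : ℕ) (lam : ℕ → ℤ) (c a m : ℕ) : Uq F N :=
  ∑ S ∈ (Finset.Icc (a + 1) (a + m - 1)).powerset,
    fList F N (c :: (S.sort (· ≤ ·) ++ [a + m])) *
      algebraMap (kk F) (Uq F N)
        (∏ t ∈ Finset.Icc (a + 1) (a + m - 1) \ S, hval F lam (t - 1))

lemma fij_congr (F : Type) [Field F] (N : ℕ) {x x' y y' : ℕ} (hx : x = x') (hy : y = y') :
    fij F N x y = fij F N x' y' := by rw [hx, hy]

lemma alg_left (F : Type) [Field F] (N : ℕ) (r : kk F) (x y : Uq F N) :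
    x * (algebraMap (kk F) (Uq F N) r * y) = algebraMap (kk F) (Uq F N) r * (x * y) := by
  rw [← mul_assoc, ← Algebra.commutes r x, mul_assoc]

lemma cast_left (F : Type) [Field F] (N : ℕ) (z : ℤ) (x y : Uq F N) :
    x * ((z : Uq F N) * y) = (z : Uq F N) * (x * y) := by
  rw [← mul_assoc, ← (Int.cast_commute z x).eq, mul_assoc]

lemma ldet_zero (F : Type) [Field F] (N : ℕ) (B : Matrix (Fin 0) (Fin 0) (Uq F N)) :
    ldet F N B = 1 := by
  rw [ldet]
  rw [Finset.sum_eq_single 1]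
  · simp
  · intro w _ hw
    exact absurd (Subsingleton.elim w 1) hw
  · intro h
    exact absurd (Finset.mem_univ 1) h

lemma ldet_succ (F : Type) [Field F] (N : ℕ) (m : ℕ)
    (B : Matrix (Fin (m + 1)) (Fin (m + 1)) (Uq F N)) :
    ldet F N B = ∑ p : Fin (m + 1),
      ((((-1 : ℤ) ^ (p : ℕ)) : ℤ) : Uq F N) *
        (B p 0 * ldet F N (B.submatrix p.succAbove Fin.succ)) := by
  rw [ldet, Finset.univ_perm_fin_succ, ← Finset.univ_product_univ]
  simp only [Finset.sum_map, Equiv.toEmbedding_apply, Finset.sum_product, zsmul_eq_mul]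
  refine Finset.sum_congr rfl fun p _ => ?_
  have hprod : ∀ w : Equiv.Perm (Fin (m + 1)),
      ((List.finRange (m + 1)).map fun j => B (w j) j).prod
        = B (w 0) 0 * ((List.finRange m).map fun j => B (w j.succ) j.succ).prod := by
    intro w
    rw [List.finRange_succ, List.map_cons, List.prod_cons, List.map_map]
    rfl
  induction p using Fin.cases with
  | zero =>
      rw [ldet]
      simp only [zsmul_eq_mul, Finset.mul_sum]
      rw [Fin.val_zero, pow_zero, Int.cast_one]
      simp only [one_mul]
      refine Finset.sum_congr rfl fun w _ => ?_
      rw [hprod, Equiv.Perm.decomposeFin.symm_sign, if_pos rfl, one_mul,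
        Equiv.Perm.decomposeFin_symm_apply_zero, ← mul_assoc,
        (Int.cast_commute ((Equiv.Perm.sign w : ℤˣ) : ℤ) (B 0 0)).eq, mul_assoc]
      congr 2
  | succ i =>
      have key : ldet F N (B.submatrix (Fin.succ i).succAbove Fin.succ)
          = ∑ w : Equiv.Perm (Fin m),
              (((Equiv.Perm.sign (i.cycleRange * w) : ℤˣ) : ℤ) : Uq F N) *
                ((List.finRange m).map fun j =>
                  B ((Fin.succ i).succAbove (i.cycleRange (w j))) j.succ).prod := by
        rw [ldet]
        simp only [zsmul_eq_mul]
        exact (Fintype.sum_equiv (Equiv.mulLeft i.cycleRange) _ _ fun w => rfl).symm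
      rw [key]
      simp only [Finset.mul_sum]
      refine Finset.sum_congr rfl fun w _ => ?_
      rw [hprod, Equiv.Perm.decomposeFin.symm_sign, if_neg (Fin.succ_ne_zero i),
        Equiv.Perm.decomposeFin_symm_apply_zero]
      have hent : (List.map
            (fun j => B ((Equiv.Perm.decomposeFin.symm (Fin.succ i, w)) j.succ) j.succ)
            (List.finRange m))
          = List.map (fun j => B ((Fin.succ i).succAbove (i.cycleRange (w j))) j.succ)
              (List.finRange m) := by
        refine List.map_congr_left fun j _ => ?_
        rw [Equiv.Perm.decomposeFin_symm_apply_succ, ← Fin.succAbove_cycleRange]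
      rw [hent, Fin.val_succ]
      have hsc : (((-1 : ℤˣ) * Equiv.Perm.sign w : ℤˣ) : ℤ)
          = (-1 : ℤ) ^ ((i : ℕ) + 1) * ((Equiv.Perm.sign (i.cycleRange * w) : ℤˣ) : ℤ) := by
        rw [map_mul, Fin.sign_cycleRange]
        simp only [Units.val_mul, Units.val_pow_eq_pow_val, Units.val_neg, Units.val_one]
        rw [← mul_assoc, ← pow_add, Odd.neg_one_pow ⟨(i : ℕ), by omega⟩]
      rw [hsc, Int.cast_mul, mul_assoc]
      congr 1
      rw [cast_left]

lemma Mmat_minor0 (F : Type) [Field F] (N : ℕ) (lam : ℕ → ℤ) (c a m : ℕ) :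
    (Mmat F N lam c a (m + 1 + 1)).submatrix ((0 : Fin (m + 1 + 1)).succAbove) Fin.succ
      = Mmat F N lam (a + 1) (a + 1) (m + 1) := by
  ext i j
  simp only [Fin.succAbove_zero, Matrix.submatrix_apply, Mmat, Matrix.of_apply, Fin.val_succ]
  rw [if_neg (by omega : ¬((i : ℕ) + 1 = 0))]
  by_cases h0 : (i : ℕ) = 0
  · rw [if_pos (by omega), if_pos h0]
    exact fij_congr F N (by omega) (by omega)
  · rw [if_neg h0]
    by_cases hle : (i : ℕ) ≤ (j : ℕ)
    · rw [if_pos (by omega), if_pos hle]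
      exact fij_congr F N (by omega) (by omega)
    · rw [if_neg (by omega), if_neg hle]
      by_cases heq : (i : ℕ) = (j : ℕ) + 1
      · rw [if_pos (by omega), if_pos heq,
          (by omega : a + ((j : ℕ) + 1) = a + 1 + (j : ℕ))]
      · rw [if_neg (by omega), if_neg heq]

lemma Mmat_minor1 (F : Type) [Field F] (N : ℕ) (lam : ℕ → ℤ) (c a m : ℕ) :
    (Mmat F N lam c a (m + 1 + 1)).submatrix ((1 : Fin (m + 1 + 1)).succAbove) Fin.succ
      = Mmat F N lam c (a + 1) (m + 1) := by
  ext i j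
  have hval1 : ((1 : Fin (m + 1 + 1)) : ℕ) = 1 := rfl
  by_cases h0 : (i : ℕ) = 0
  · have hrow : (1 : Fin (m + 1 + 1)).succAbove i = 0 := by
      rw [Fin.succAbove, if_pos (by rw [Fin.lt_def]; simp [h0, hval1])]
      ext
      simp [h0]
    simp only [Matrix.submatrix_apply, hrow, Mmat, Matrix.of_apply, Fin.val_succ, Fin.val_zero]
    rw [if_pos trivial, if_pos h0]
    exact fij_congr F N rfl (by omega)
  · have hrow : (1 : Fin (m + 1 + 1)).succAbove i = i.succ := by
      rw [Fin.succAbove, if_neg (by rw [Fin.lt_def]; simp only [Fin.coe_castSucc, hval1]; omega)]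
    simp only [Matrix.submatrix_apply, hrow, Mmat, Matrix.of_apply, Fin.val_succ]
    rw [if_neg (by omega), if_neg h0]
    by_cases hle : (i : ℕ) ≤ (j : ℕ)
    · rw [if_pos (by omega), if_pos hle]
      exact fij_congr F N (by omega) (by omega)
    · rw [if_neg (by omega), if_neg hle]
      by_cases heq : (i : ℕ) = (j : ℕ) + 1
      · rw [if_pos (by omega), if_pos heq,
          (by omega : a + ((j : ℕ) + 1) = a + 1 + (j : ℕ))]
      · rw [if_neg (by omega), if_neg heq]

lemma fList_cons (F : Type) [Field F] (N : ℕ) (x y : ℕ) (L : List ℕ) :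
    fList F N (x :: y :: L) = fij F N x y * fList F N (y :: L) := rfl

lemma Rsum_succ (F : Type) [Field F] (N : ℕ) (lam : ℕ → ℤ) (c a m : ℕ) (hm : 1 ≤ m) :
    Rsum F N lam c a (m + 1) =
      algebraMap (kk F) (Uq F N) (hval F lam a) * Rsum F N lam c (a + 1) m +
        fij F N c (a + 1) * Rsum F N lam (a + 1) (a + 1) m := by
  have e1 : a + (m + 1) - 1 = a + m := by omega
  have e2 : a + 1 + m - 1 = a + m := by omega
  have e3 : a + 1 + m = a + (m + 1) := by omega
  have e4 : a + 1 + 1 = a + 2 := by omega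
  have hicc : Finset.Icc (a + 1) (a + m) = insert (a + 1) (Finset.Icc (a + 2) (a + m)) := by
    ext t
    simp only [Finset.mem_Icc, Finset.mem_insert]
    omega
  have hnm : a + 1 ∉ Finset.Icc (a + 2) (a + m) := by simp
  rw [Rsum, Rsum, Rsum, e1, e2, e3, e4, hicc, Finset.sum_powerset_insert hnm]
  congr 1
  · -- h-branch: subsets not containing a+1
    rw [Finset.mul_sum]
    refine Finset.sum_congr rfl fun S hS => ?_
    rw [Finset.mem_powerset] at hS
    have hns : a + 1 ∉ S := fun h => hnm (hS h)
    have hset : insert (a + 1) (Finset.Icc (a + 2) (a + m)) \ S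
        = insert (a + 1) (Finset.Icc (a + 2) (a + m) \ S) := by
      ext t
      simp only [Finset.mem_sdiff, Finset.mem_insert]
      constructor
      · rintro ⟨h1 | h1, h2⟩
        · exact Or.inl h1
        · exact Or.inr ⟨h1, h2⟩
      · rintro (rfl | ⟨h1, h2⟩)
        · exact ⟨Or.inl rfl, hns⟩
        · exact ⟨Or.inr h1, h2⟩
    rw [hset, Finset.prod_insert (by simp), (by omega : a + 1 - 1 = a), map_mul, alg_left]
  · -- f-branch: subsets containing a+1
    rw [Finset.mul_sum]
    refine Finset.sum_congr rfl fun S hS => ?_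
    rw [Finset.mem_powerset] at hS
    have hns : a + 1 ∉ S := fun h => hnm (hS h)
    have hsort : (insert (a + 1) S).sort (· ≤ ·) = (a + 1) :: S.sort (· ≤ ·) :=
      Finset.sort_insert (· ≤ ·) (fun b hb => by
        have := hS hb; rw [Finset.mem_Icc] at this; omega) hns
    have hset : insert (a + 1) (Finset.Icc (a + 2) (a + m)) \ insert (a + 1) S
        = Finset.Icc (a + 2) (a + m) \ S := by
      ext t
      simp only [Finset.mem_sdiff, Finset.mem_insert, Finset.mem_Icc]
      constructor
      · rintro ⟨h1 | h1, h2⟩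
        · exact absurd (Or.inl h1) h2
        · exact ⟨h1, fun h => h2 (Or.inr h)⟩
      · rintro ⟨h1, h2⟩
        refine ⟨Or.inr h1, ?_⟩
        rintro (h | h)
        · omega
        · exact h2 h
    rw [hsort, hset, List.cons_append, fList_cons, mul_assoc]

lemma main_lemma (F : Type) [Field F] (N : ℕ) (lam : ℕ → ℤ) (m : ℕ) :
    ∀ c a : ℕ, ldet F N (Mmat F N lam c a (m + 1)) = Rsum F N lam c a (m + 1) := by
  induction m with
  | zero =>
      intro c a
      show ldet F N (Mmat F N lam c a 1) = Rsum F N lam c a 1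
      rw [ldet_succ, Fin.sum_univ_one, ldet_zero, mul_one]
      have hB : Mmat F N lam c a 1 0 0 = fij F N c (a + 1) := by
        simp [Mmat]
      rw [hB, Fin.val_zero, pow_zero, Int.cast_one, one_mul, Rsum,
        (by omega : a + 1 - 1 = a), Finset.Icc_eq_empty (by omega : ¬a + 1 ≤ a),
        Finset.powerset_empty, Finset.sum_singleton, Finset.sort_empty, Finset.sdiff_empty,
        Finset.prod_empty, map_one, mul_one, List.nil_append]
      have hfl : fList F N [c, a + 1] = fij F N c (a + 1) := by
        rw [fList_cons]
        simp [fList]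
      rw [hfl]
  | succ m ih =>
      intro c a
      rw [ldet_succ, Fin.sum_univ_succ, Fin.sum_univ_succ]
      simp only [Fin.succ_zero_eq_one]
      have hzero : ∀ p : Fin m,
          ((((-1 : ℤ) ^ ((p.succ.succ : Fin (m + 1 + 1)) : ℕ)) : ℤ) : Uq F N)
              * (Mmat F N lam c a (m + 1 + 1) p.succ.succ 0 *
                ldet F N ((Mmat F N lam c a (m + 1 + 1)).submatrix p.succ.succ.succAbove
                  Fin.succ))
            = 0 := by
        intro p
        have hent : Mmat F N lam c a (m + 1 + 1) p.succ.succ 0 = 0 := by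
          simp only [Mmat, Matrix.of_apply, Fin.val_succ, Fin.val_zero]
          split_ifs <;> simp_all
        rw [hent, zero_mul, mul_zero]
      rw [Finset.sum_eq_zero fun p _ => hzero p, add_zero]
      have h00 : Mmat F N lam c a (m + 1 + 1) 0 0 = fij F N c (a + 1) := by
        simp [Mmat]
      have h10 : Mmat F N lam c a (m + 1 + 1) 1 0
          = -(algebraMap (kk F) (Uq F N) (hval F lam a)) := by
        simp [Mmat]
      rw [h00, h10, Mmat_minor0, Mmat_minor1, ih, ih]
      have c0 : (((-1 : ℤ) ^ (((0 : Fin (m + 1 + 1))) : ℕ) : ℤ) : Uq F N) = 1 := by simp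
      have c1 : (((-1 : ℤ) ^ (((1 : Fin (m + 1 + 1))) : ℕ) : ℤ) : Uq F N) = -1 := by simp
      rw [c0, c1, one_mul,
        show -(algebraMap (kk F) (Uq F N) (hval F lam a)) * Rsum F N lam c (a + 1) (m + 1)
            = -(algebraMap (kk F) (Uq F N) (hval F lam a) * Rsum F N lam c (a + 1) (m + 1)) from
          neg_mul (algebraMap (kk F) (Uq F N) (hval F lam a))
            (Rsum F N lam c (a + 1) (m + 1)),
        show (-1 : Uq F N) * -(algebraMap (kk F) (Uq F N) (hval F lam a)
              * Rsum F N lam c (a + 1) (m + 1))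
            = -(-(algebraMap (kk F) (Uq F N) (hval F lam a) * Rsum F N lam c (a + 1) (m + 1)))
          from neg_one_mul (-(algebraMap (kk F) (Uq F N) (hval F lam a)
              * Rsum F N lam c (a + 1) (m + 1))),
        show -(-(algebraMap (kk F) (Uq F N) (hval F lam a) * Rsum F N lam c (a + 1) (m + 1)))
            = algebraMap (kk F) (Uq F N) (hval F lam a) * Rsum F N lam c (a + 1) (m + 1) from
          neg_neg (algebraMap (kk F) (Uq F N) (hval F lam a)
            * Rsum F N lam c (a + 1) (m + 1)),
        Rsum_succ F N lam c a (m + 1) (by omega)]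
      exact add_comm _ _

lemma sort_insert_max (N : ℕ) (S : Finset ℕ) (hS : S ⊆ Finset.Icc 2 N) :
    (insert (N + 1) S).sort (· ≤ ·) = S.sort (· ≤ ·) ++ [N + 1] := by
  have hns : N + 1 ∉ S := fun h => by have := hS h; rw [Finset.mem_Icc] at this; omega
  refine (fun hp hs => List.Perm.eq_of_pairwise' (r := fun a b : ℕ => a ≤ b) (Finset.pairwise_sort _ _) hs hp) ?_ ?_
  · refine ((insert (N + 1) S).sort_perm_toList _).trans ?_
    refine ((Finset.toList_insert hns).trans ?_).trans (List.perm_append_singleton _ _).symm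
    exact List.Perm.cons _ (S.sort_perm_toList _).symm
  · rw [List.pairwise_append]
    refine ⟨Finset.pairwise_sort _ _, List.pairwise_singleton _ _, fun x hx y hy => ?_⟩
    rw [List.mem_singleton] at hy
    subst hy
    have := hS ((Finset.mem_sort _).1 hx)
    rw [Finset.mem_Icc] at this
    omega

theorem stmt11_key (F : Type) [Field F] (N : ℕ) (hN : 1 ≤ N) (lam : ℕ → ℤ) :
    ldet F N (Dmat F N lam (N + 1)) =
      ∑ I ∈ II N, fSet F N I * algebraMap (kk F) (Uq F N) (HIval F N lam I) := by
  obtain ⟨m, rfl⟩ : ∃ m, N = m + 1 := ⟨N - 1, by omega⟩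
  have hDM : (Dmat F (m + 1) lam (m + 1 + 1) : Matrix (Fin (m + 1)) (Fin (m + 1))
        (Uq F (m + 1))) = Mmat F (m + 1) lam 1 1 (m + 1) := by
    ext i j
    simp only [Dmat, Mmat, Matrix.of_apply]
    by_cases h0 : (i : ℕ) = 0
    · rw [if_pos (by omega), if_pos h0]
      exact fij_congr F (m + 1) (by omega) (by omega)
    · rw [if_neg h0]
      by_cases hle : (i : ℕ) ≤ (j : ℕ)
      · rw [if_pos hle, if_pos hle]
        exact fij_congr F (m + 1) (by omega) (by omega)
      · rw [if_neg hle, if_neg hle]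
        by_cases heq : (i : ℕ) = (j : ℕ) + 1
        · rw [if_pos heq, if_pos heq, (by omega : (j : ℕ) + 1 = 1 + (j : ℕ))]
        · rw [if_neg heq, if_neg heq]
  have step1 : ldet F (m + 1) (Dmat F (m + 1) lam (m + 1 + 1))
      = Rsum F (m + 1) lam 1 1 (m + 1) :=
    (congrArg (ldet F (m + 1)) hDM).trans (main_lemma F (m + 1) lam m 1 1)
  rw [step1, Rsum, (by omega : 1 + (m + 1) - 1 = m + 1), (by norm_num : (1 : ℕ) + 1 = 2)]
  refine Finset.sum_nbij' (fun S => insert 1 (insert (m + 1 + 1) S))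
    (fun I => I \ {1, m + 1 + 1}) ?_ ?_ ?_ ?_ ?_
  · intro S hS
    rw [Finset.mem_powerset] at hS
    rw [II, Finset.mem_filter, Finset.mem_powerset]
    refine ⟨?_, Finset.mem_insert_self _ _,
      Finset.mem_insert_of_mem (Finset.mem_insert_self _ _)⟩
    intro t ht
    rw [Finset.mem_insert, Finset.mem_insert] at ht
    rw [Finset.mem_Icc]
    rcases ht with rfl | rfl | h
    · omega
    · omega
    · have := hS h; rw [Finset.mem_Icc] at this; omega
  · intro I hI
    rw [II, Finset.mem_filter, Finset.mem_powerset] at hI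
    rw [Finset.mem_powerset]
    intro t ht
    rw [Finset.mem_sdiff, Finset.mem_insert, Finset.mem_singleton] at ht
    have := hI.1 ht.1
    rw [Finset.mem_Icc] at this ⊢
    omega
  · intro S hS
    rw [Finset.mem_powerset] at hS
    ext t
    simp only [Finset.mem_sdiff, Finset.mem_insert, Finset.mem_singleton]
    constructor
    · rintro ⟨rfl | rfl | h, h2⟩
      · exact absurd (Or.inl rfl) h2
      · exact absurd (Or.inr rfl) h2
      · exact h
    · intro h
      have := hS h
      rw [Finset.mem_Icc] at this
      exact ⟨Or.inr (Or.inr h), by omega⟩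
  · intro I hI
    rw [II, Finset.mem_filter, Finset.mem_powerset] at hI
    ext t
    simp only [Finset.mem_insert, Finset.mem_sdiff, Finset.mem_singleton]
    constructor
    · rintro (rfl | rfl | ⟨h, _⟩)
      · exact hI.2.1
      · exact hI.2.2
      · exact h
    · intro ht
      by_cases h1 : t = 1
      · exact Or.inl h1
      · by_cases h2 : t = m + 1 + 1
        · exact Or.inr (Or.inl h2)
        · exact Or.inr (Or.inr ⟨ht, fun h => by tauto⟩)
  · intro S hS
    rw [Finset.mem_powerset] at hS
    have hsub : ∀ b ∈ insert (m + 1 + 1) S, 1 ≤ b := by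
      intro b hb
      rw [Finset.mem_insert] at hb
      rcases hb with rfl | hb
      · omega
      · have := hS hb; rw [Finset.mem_Icc] at this; omega
    have hnotin : 1 ∉ insert (m + 1 + 1) S := by
      rw [Finset.mem_insert]
      rintro (h | h)
      · omega
      · have := hS h; rw [Finset.mem_Icc] at this; omega
    have hsort : (insert 1 (insert (m + 1 + 1) S)).sort (· ≤ ·)
        = 1 :: (S.sort (· ≤ ·) ++ [m + 1 + 1]) := by
      rw [Finset.sort_insert (· ≤ ·) hsub hnotin, sort_insert_max (m + 1) S hS]
    have hrset : rSet (m + 1) (insert 1 (insert (m + 1 + 1) S))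
        = (Finset.Icc 2 (m + 1) \ S).image (· - 1) := by
      rw [rSet]
      congr 1
      ext t
      simp only [Finset.mem_sdiff, Finset.mem_Icc, Finset.mem_insert, Finset.mem_singleton]
      constructor
      · rintro ⟨h1, h2⟩
        push_neg at h2
        exact ⟨⟨by omega, by omega⟩, h2.2.2⟩
      · rintro ⟨⟨h1, h2⟩, h3⟩
        refine ⟨⟨by omega, by omega⟩, ?_⟩
        push_neg
        exact ⟨by omega, by omega, h3⟩
    have hHI : HIval F (m + 1) lam (insert 1 (insert (m + 1 + 1) S))
        = ∏ t ∈ Finset.Icc 2 (m + 1) \ S, hval F lam (t - 1) := by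
      rw [HIval, hrset, Finset.prod_image]
      intro x hx y hy hxy
      rw [Finset.mem_coe, Finset.mem_sdiff, Finset.mem_Icc] at hx hy
      simp only at hxy
      omega
    rw [fSet, hsort, hHI, (by omega : 1 + (m + 1) = m + 1 + 1)]

end Aux

/-- for every weight `λ`,
`det→(D^{N+1}(λ)) = Σ_{I ∈ 𝕀} f_I · H_I(λ)` in `U`; in particular for every `λ`
with `(λ,η) = 1-N` the left-to-right determinant equals the evaluation at `λ`
of the Shapovalov element `Θ_η = Σ_{I ∈ 𝕀} f_I H_I`. -/


theorem stmt11 (F : Type) [Field F] (N : ℕ) (hN : 1 ≤ N) :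
    (∀ lam : ℕ → ℤ,
      ldet F N (Dmat F N lam (N + 1)) =
        ∑ I ∈ II N, fSet F N I * algebraMap (kk F) (Uq F N) (HIval F N lam I)) ∧
    (∀ lam : ℕ → ℤ, pairσ lam N = 1 - (N : ℤ) →
      ldet F N (Dmat F N lam (N + 1)) =
        ∑ I ∈ II N, fSet F N I * algebraMap (kk F) (Uq F N) (HIval F N lam I)) := by
  exact ⟨fun lam => stmt11_key F N hN lam, fun lam _ => stmt11_key F N hN lam⟩
end
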